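/- Let p ≥ 7 be a prime with p ≡ 1 (mod 4), and let S(p) = { ∑ of the set of distinct residues {x^4 + cx^2 mod p : x ∈ Z/pZ} : c ∈ Z/pZ }. Then: S(p) = {x^2 mod p : x ∈ Z/pZ} if −1 ∈ S(p); S(p) = {x^4 mod p : x ∈ Z/pZ} if −1 ∉ S(p) and p ≡ 5 (mod 8); and S(p) = ({x^2 mod p} \ {x^4 mod p}) ∪ {0} if −1 ∉ S(p) and p ≡ 1 (mod 8). -/

import Mathlib

open Finset

section Helpers
variable {p : ℕ} [hpp : Fact p.Prime]




theorem pge13 (hp7 : 7 ≤ p) (hp : p % 4 = 1) : 13 ≤ p := by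
  by_contra h
  push_neg at h
  interval_cases p <;> simp_all <;> revert hpp <;> decide

theorem sum_pow_eq (hp7 : 13 ≤ p) (k : ℕ) (h0 : 0 < k) (hk : k ≤ p) :
    ∑ v : ZMod p, v ^ k = if k = p - 1 then -1 else 0 := by
  have hcard : Fintype.card (ZMod p) = p := ZMod.card p
  rcases eq_or_lt_of_le hk with he | hk'
  · have h1 : ∀ v : ZMod p, v ^ k = v := fun v => by rw [he]; exact ZMod.pow_card v
    simp only [h1]
    rw [if_neg (by omega)]
    have := FiniteField.sum_pow_lt_card_sub_one (K := ZMod p) 1 (by rw [hcard]; omega)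
    simpa using this
  · rcases eq_or_lt_of_le (Nat.le_sub_one_of_lt hk') with he | hlt
    · rw [if_pos he]
      have h1 : ∀ v : ZMod p, v ^ k = 1 - (if v = 0 then 1 else 0) := by
        intro v
        split_ifs with hv
        · subst hv; rw [zero_pow (by omega)]; ring
        · rw [he, ZMod.pow_card_sub_one_eq_one hv]; ring
      simp only [h1]
      rw [Finset.sum_sub_distrib, Finset.sum_const, Finset.sum_ite_eq' Finset.univ (0 : ZMod p)
        (fun _ => (1 : ZMod p))]
      simp [hcard, ZMod.natCast_self]
    · rw [if_neg (by omega)]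
      exact FiniteField.sum_pow_lt_card_sub_one (K := ZMod p) k (by rw [hcard]; omega)






theorem two_ne (hp13 : 13 ≤ p) : (2 : ZMod p) ≠ 0 := by
  have : ((2:ℕ) : ZMod p) ≠ 0 := by
    rw [Ne, ZMod.natCast_eq_zero_iff]
    intro h; have := Nat.le_of_dvd (by norm_num) h; omega
  simpa using this

theorem three_ne (hp13 : 13 ≤ p) : (3 : ZMod p) ≠ 0 := by
  have : ((3:ℕ) : ZMod p) ≠ 0 := by
    rw [Ne, ZMod.natCast_eq_zero_iff]
    intro h; have := Nat.le_of_dvd (by norm_num) h; omega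
  simpa using this

theorem podd (hp13 : 13 ≤ p) : p % 2 = 1 := by
  rcases Nat.Prime.eq_two_or_odd hpp.out with h | h
  · omega
  · exact h

theorem chi_sq (hp13 : 13 ≤ p) {a : ZMod p} (ha : a ≠ 0) (h : IsSquare a) :
    a ^ ((p - 1) / 2) = 1 := by
  have hodd := podd hp13
  have hchar : ringChar (ZMod p) ≠ 2 := by
    rw [ZMod.ringChar_zmod_n]; omega
  have := (FiniteField.isSquare_iff hchar ha).mp h
  rwa [ZMod.card, show p / 2 = (p - 1) / 2 by omega] at this

theorem chi_nonsq (hp13 : 13 ≤ p) {a : ZMod p} (h : ¬ IsSquare a) :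
    a ^ ((p - 1) / 2) = -1 := by
  have hodd := podd hp13
  have ha : a ≠ 0 := by rintro rfl; exact h ⟨0, by ring⟩
  have hchar : ringChar (ZMod p) ≠ 2 := by
    rw [ZMod.ringChar_zmod_n]; omega
  have hsq : (a ^ ((p - 1) / 2)) ^ 2 = 1 := by
    rw [← pow_mul, show (p - 1) / 2 * 2 = p - 1 by omega]
    exact ZMod.pow_card_sub_one_eq_one ha
  have : (a ^ ((p-1)/2) - 1) * (a ^ ((p-1)/2) + 1) = 0 := by ring_nf; linear_combination hsq
  rcases mul_eq_zero.mp this with h1 | h1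
  · exact absurd ((FiniteField.isSquare_iff hchar ha).mpr (by
      rw [ZMod.card, show p / 2 = (p - 1) / 2 by omega]
      exact sub_eq_zero.mp h1)) h
  · exact eq_neg_of_add_eq_zero_left h1






theorem card_sqrt (hp13 : 13 ≤ p) (v : ZMod p) :
    ((Finset.univ.filter (fun u : ZMod p => u ^ 2 = v)).card : ZMod p)
      = 1 + v ^ ((p - 1) / 2) := by
  rcases eq_or_ne v 0 with rfl | hv
  · rw [zero_pow (by have := podd hp13; omega)]
    have : (Finset.univ.filter (fun u : ZMod p => u ^ 2 = 0)) = {0} := by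
      ext u; simp [pow_eq_zero_iff]
    rw [this]; simp
  · by_cases hsq : IsSquare v
    · obtain ⟨w, hw⟩ := hsq
      have hw2 : w ^ 2 = v := by rw [hw]; ring
      have hwne : w ≠ 0 := by rintro rfl; apply hv; rw [← hw2]; ring
      have hset : (Finset.univ.filter (fun u : ZMod p => u ^ 2 = v)) = {w, -w} := by
        ext u
        simp only [Finset.mem_filter, Finset.mem_univ, true_and, Finset.mem_insert,
          Finset.mem_singleton]
        constructor
        · intro h
          have : (u - w) * (u + w) = 0 := by linear_combination h - hw2
          rcases mul_eq_zero.mp this with h1 | h1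
          · left; linear_combination h1
          · right; linear_combination h1
        · rintro (rfl | rfl) <;> [exact hw2; linear_combination hw2]
      rw [hset, Finset.card_pair (by
        intro h
        have h2 : (2 : ZMod p) * w = 0 := by linear_combination h
        rcases mul_eq_zero.mp h2 with h3 | h3
        · exact two_ne hp13 h3
        · exact hwne h3)]
      rw [chi_sq hp13 hv ⟨w, hw⟩]
      norm_num
    · have hset : (Finset.univ.filter (fun u : ZMod p => u ^ 2 = v)) = ∅ := by
        ext u
        simp only [Finset.mem_filter, Finset.mem_univ, true_and, Finset.notMem_empty,
          iff_false]
        intro h; exact hsq ⟨u, by rw [← h]; ring⟩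
      rw [hset, chi_nonsq hp13 hsq]
      norm_num

theorem sq_fiber_sum (hp13 : 13 ≤ p) (G : ZMod p → ZMod p) :
    ∑ u : ZMod p, G (u ^ 2) = ∑ v : ZMod p, (1 + v ^ ((p - 1) / 2)) * G v := by
  rw [← Finset.sum_fiberwise Finset.univ (fun u : ZMod p => u ^ 2)
    (fun u => G (u ^ 2))]
  refine Finset.sum_congr rfl fun v _ => ?_
  have : ∀ u ∈ Finset.univ.filter (fun u : ZMod p => u ^ 2 = v), G (u ^ 2) = G v := by
    intro u hu
    rw [(Finset.mem_filter.mp hu).2]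
  rw [Finset.sum_congr rfl this, Finset.sum_const, nsmul_eq_mul, card_sqrt hp13]







theorem binom_sum (d : ZMod p) (r s : ℕ) :
    ∑ v : ZMod p, v ^ r * (d - v) ^ s
      = ∑ j ∈ Finset.range (s + 1),
          (Nat.choose s j : ZMod p) * d ^ (s - j) * (-1) ^ j * ∑ v : ZMod p, v ^ (r + j) := by
  have hterm : ∀ v : ZMod p, v ^ r * (d - v) ^ s
      = ∑ j ∈ Finset.range (s + 1),
          (Nat.choose s j : ZMod p) * d ^ (s - j) * (-1) ^ j * v ^ (r + j) := by
    intro v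
    have h1 : d - v = -v + d := by ring
    rw [h1, add_pow, Finset.mul_sum]
    refine Finset.sum_congr rfl fun j hj => ?_
    rw [neg_pow, pow_add]
    ring
  simp only [hterm]
  rw [Finset.sum_comm]
  exact Finset.sum_congr rfl fun j _ => (Finset.mul_sum _ _ _).symm

theorem JS (hp13 : 13 ≤ p) (hp : p % 4 = 1) (d : ZMod p) :
    ∑ u : ZMod p, (d - u ^ 2) ^ ((p - 1) / 2 + 1)
      = -(((p - 1) / 2 + 1 : ℕ) : ZMod p) * d := by
  have hodd := podd hp13
  set e := (p - 1) / 2 with he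
  have h2e : 2 * e = p - 1 := by omega
  have heEven : Even e := by rw [Nat.even_iff]; omega
  rw [sq_fiber_sum hp13 (fun v => (d - v) ^ (e + 1))]
  have split : ∑ v : ZMod p, (1 + v ^ e) * (d - v) ^ (e + 1)
      = (∑ v : ZMod p, (d - v) ^ (e + 1)) + ∑ v : ZMod p, v ^ e * (d - v) ^ (e + 1) := by
    rw [← Finset.sum_add_distrib]
    exact Finset.sum_congr rfl fun v _ => by ring
  rw [split]
  have h1 : ∑ v : ZMod p, (d - v) ^ (e + 1) = 0 := by
    have heq : ∑ v : ZMod p, (d - v) ^ (e + 1) = ∑ v : ZMod p, v ^ (e + 1) :=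
      Fintype.sum_equiv (Equiv.subLeft d) _ _ (fun v => rfl)
    rw [heq, sum_pow_eq hp13 (e + 1) (by omega) (by omega), if_neg (by omega)]
  have h2 : ∑ v : ZMod p, v ^ e * (d - v) ^ (e + 1) = -(((e + 1 : ℕ)) : ZMod p) * d := by
    rw [binom_sum]
    rw [Finset.sum_eq_single e]
    · rw [sum_pow_eq hp13 (e + e) (by omega) (by omega), if_pos (by omega)]
      rw [Nat.choose_succ_self_right, Even.neg_one_pow heEven,
        show e + 1 - e = 1 by omega]
      push_cast
      ring
    · intro j hj hje
      rw [sum_pow_eq hp13 (e + j) (by omega) (by simp at hj; omega),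
        if_neg (by simp at hj; omega), mul_zero]
    · intro h
      exact absurd (Finset.mem_range.mpr (by omega)) h
  rw [h1, h2, zero_add]







-- the four-term expansion sum
theorem sum_gg (hp13 : 13 ≤ p) (hp : p % 4 = 1) (c : ZMod p) :
    ∑ t : ZMod p, (1 + t ^ ((p - 1) / 2)) * (1 + (-c - t) ^ ((p - 1) / 2)) * (t ^ 2 + c * t)
      = (((p - 1) / 2 + 1 : ℕ) : ZMod p) * (c ^ 2 / 4) := by
  have hodd := podd hp13
  set e := (p - 1) / 2 with he
  have h2e : 2 * e = p - 1 := by omega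
  have heEven : Even e := by rw [Nat.even_iff]; omega
  have hps : ∀ k, 0 < k → k < p - 1 → ∑ v : ZMod p, v ^ k = 0 := by
    intro k h1 h2
    rw [sum_pow_eq hp13 k h1 (by omega), if_neg (by omega)]
  have hsum1 : ∑ t : ZMod p, (t ^ 2 + c * t) = 0 := by
    rw [Finset.sum_add_distrib, ← Finset.mul_sum, hps 2 (by omega) (by omega)]
    have h1 : ∑ t : ZMod p, t = 0 := by simpa using hps 1 (by omega) (by omega)
    rw [h1, mul_zero, add_zero]
  have hsum2 : ∑ t : ZMod p, (t ^ 2 + c * t) * t ^ e = 0 := by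
    have hterm : ∀ t : ZMod p, (t ^ 2 + c * t) * t ^ e = t ^ (e + 2) + c * t ^ (e + 1) := by
      intro t; rw [pow_add, pow_add]; ring
    simp only [hterm]
    rw [Finset.sum_add_distrib, ← Finset.mul_sum, hps (e + 2) (by omega) (by omega),
      hps (e + 1) (by omega) (by omega), mul_zero, add_zero]
  have hsum3 : ∑ t : ZMod p, (t ^ 2 + c * t) * (-c - t) ^ e = 0 := by
    have heq : ∑ t : ZMod p, (t ^ 2 + c * t) * (-c - t) ^ e
        = ∑ t : ZMod p, (t ^ 2 + c * t) * t ^ e := by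
      refine Fintype.sum_equiv (Equiv.subLeft (-c)) _ _ fun x => ?_
      simp only [Equiv.subLeft_apply]
      rw [show (-c - x) ^ 2 + c * (-c - x) = x ^ 2 + c * x by ring]
    rw [heq, hsum2]
  have hsum4 : ∑ t : ZMod p, (t ^ 2 + c * t) ^ (e + 1)
      = (((e + 1 : ℕ)) : ZMod p) * (c ^ 2 / 4) := by
    have heq : ∑ t : ZMod p, (t ^ 2 + c * t) ^ (e + 1)
        = ∑ u : ZMod p, (-(c ^ 2 / 4 - u ^ 2)) ^ (e + 1) := by
      refine Fintype.sum_equiv (Equiv.addRight (c / 2)) _ _ fun x => ?_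
      simp only [Equiv.coe_addRight]
      congr 1
      have h2 := two_ne hp13
      have h4 : (4 : ZMod p) ≠ 0 := by
        rw [show (4 : ZMod p) = 2 * 2 by norm_num]
        exact mul_ne_zero h2 h2
      field_simp
      ring
    rw [heq]
    have hneg : ∀ u : ZMod p, (-(c ^ 2 / 4 - u ^ 2)) ^ (e + 1)
        = -(c ^ 2 / 4 - u ^ 2) ^ (e + 1) := by
      intro u
      rw [neg_pow, Odd.neg_one_pow (Even.add_one heEven), neg_one_mul]
    simp only [hneg]
    rw [Finset.sum_neg_distrib, JS hp13 hp (c ^ 2 / 4)]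
    ring
  have hterm : ∀ t : ZMod p,
      (1 + t ^ e) * (1 + (-c - t) ^ e) * (t ^ 2 + c * t)
        = (t ^ 2 + c * t) + (t ^ 2 + c * t) * t ^ e + (t ^ 2 + c * t) * (-c - t) ^ e
          + (t ^ 2 + c * t) ^ (e + 1) := by
    intro t
    have hmul : t ^ e * (-c - t) ^ e = (t ^ 2 + c * t) ^ e := by
      rw [← mul_pow, show t * (-c - t) = -(t ^ 2 + c * t) by ring, neg_pow,
        Even.neg_one_pow heEven, one_mul]
    linear_combination (t ^ 2 + c * t) * hmul
  simp only [hterm]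
  rw [Finset.sum_add_distrib, Finset.sum_add_distrib, Finset.sum_add_distrib,
    hsum1, hsum2, hsum3, hsum4]
  ring







theorem Tformula (hp13 : 13 ≤ p) (hp : p % 4 = 1) (c : ZMod p) :
    ((Finset.univ.image (fun x : ZMod p => x ^ 4 + c * x ^ 2)).sum id)
      = if IsSquare (-c / 2) then -9 * c ^ 2 / 64 else -c ^ 2 / 64 := by
  have hodd := podd hp13
  have h2 := two_ne hp13
  have h4 : (4 : ZMod p) ≠ 0 := by
    rw [show (4 : ZMod p) = 2 ^ 2 by norm_num]; exact pow_ne_zero 2 h2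
  have h64 : (64 : ZMod p) ≠ 0 := by
    rw [show (64 : ZMod p) = 2 ^ 6 by norm_num]; exact pow_ne_zero 6 h2
  set e := (p - 1) / 2 with he
  have h2e : 2 * e = p - 1 := by omega
  set κ : ZMod p := (((e + 1 : ℕ)) : ZMod p) with hκdef
  have hκ : (2 : ZMod p) * κ = 1 := by
    rw [hκdef]
    have : ((2 * (e + 1) : ℕ) : ZMod p) = ((p + 1 : ℕ) : ZMod p) := by
      congr 1; omega
    push_cast at this
    rw [ZMod.natCast_self] at this
    push_cast
    linear_combination this
  have hκval : κ = 1 / 2 := by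
    field_simp
    linear_combination hκ
  -- the square set and f
  set Q0 : Finset (ZMod p) := Finset.univ.image (fun x : ZMod p => x ^ 2) with hQ0def
  set f : ZMod p → ZMod p := fun t => t ^ 2 + c * t with hfdef
  have hQ0mem : ∀ t : ZMod p, t ∈ Q0 ↔ IsSquare t := by
    intro t
    rw [hQ0def, Finset.mem_image]
    constructor
    · rintro ⟨x, -, rfl⟩; exact ⟨x, pow_two x⟩
    · rintro ⟨r, rfl⟩; exact ⟨r, Finset.mem_univ r, pow_two r⟩
  have hU : Finset.univ.image (fun x : ZMod p => x ^ 4 + c * x ^ 2) = Q0.image f := by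
    rw [hQ0def, Finset.image_image]
    congr 1
    funext x
    simp only [hfdef, Function.comp_apply]
    ring
  set U : Finset (ZMod p) := Q0.image f with hUdef
  -- Step 1 : sum over Q0 of f is 0
  have hQ0sum : ∑ t ∈ Q0, f t = 0 := by
    have hg0 : ∀ t : ZMod p, t ∉ Q0 → (1 + t ^ e) * f t = 0 := by
      intro t ht
      rw [chi_nonsq hp13 (fun hsq => ht ((hQ0mem t).mpr hsq))]
      ring
    have hsub : ∑ t ∈ Q0, (1 + t ^ e) * f t = ∑ t : ZMod p, (1 + t ^ e) * f t :=
      Finset.sum_subset (Finset.subset_univ Q0) (fun t _ ht => hg0 t ht)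
    have hcongr : ∀ t ∈ Q0, (1 + t ^ e) * f t = 2 * f t := by
      intro t ht
      rcases eq_or_ne t 0 with rfl | htne
      · have hf0 : f (0 : ZMod p) = 0 := by rw [hfdef]; ring
        rw [hf0, mul_zero, mul_zero]
      · rw [chi_sq hp13 htne ((hQ0mem t).mp ht)]; ring
    have hz : ∑ t : ZMod p, (1 + t ^ e) * f t = 0 := by
      have hps : ∀ k, 0 < k → k < p - 1 → ∑ v : ZMod p, v ^ k = 0 := by
        intro k h1 hlt
        rw [sum_pow_eq hp13 k h1 (by omega), if_neg (by omega)]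
      have hterm : ∀ t : ZMod p, (1 + t ^ e) * f t
          = t ^ 2 + c * t + (t ^ (e + 2) + c * t ^ (e + 1)) := by
        intro t; rw [hfdef, pow_add, pow_add]; ring
      simp only [hterm]
      rw [Finset.sum_add_distrib, Finset.sum_add_distrib, Finset.sum_add_distrib,
        ← Finset.mul_sum, ← Finset.mul_sum, hps 2 (by omega) (by omega),
        hps (e + 2) (by omega) (by omega), hps (e + 1) (by omega) (by omega)]
      have h1 : ∑ t : ZMod p, t = 0 := by simpa using hps 1 (by omega) (by omega)
      rw [h1]
      ring
    have h2sum : 2 * ∑ t ∈ Q0, f t = 0 := by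
      rw [Finset.mul_sum, ← Finset.sum_congr rfl hcongr, hsub, hz]
    rcases mul_eq_zero.mp h2sum with h | h
    · exact absurd h h2
    · exact h
  -- Step 3 : sum over D2
  set D2 : Finset (ZMod p) := Q0.filter (fun t => IsSquare (-c - t)) with hD2def
  have hD2sum : (4 : ZMod p) * ∑ t ∈ D2, f t = κ * (c ^ 2 / 4) := by
    have h1 : ∑ t : ZMod p, (1 + t ^ e) * (1 + (-c - t) ^ e) * f t
        = ∑ t ∈ Q0, (1 + t ^ e) * (1 + (-c - t) ^ e) * f t := by
      refine (Finset.sum_subset (Finset.subset_univ Q0) ?_).symm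
      intro t _ ht
      rw [chi_nonsq hp13 (fun hsq => ht ((hQ0mem t).mpr hsq))]
      ring
    have h2' : ∀ t ∈ Q0, (1 + t ^ e) * (1 + (-c - t) ^ e) * f t
        = if IsSquare (-c - t) then 4 * f t else 0 := by
      intro t ht
      by_cases hsq : IsSquare (-c - t)
      · rw [if_pos hsq]
        rcases eq_or_ne t 0 with rfl | htne
        · have hf0 : f (0 : ZMod p) = 0 := by rw [hfdef]; ring
          rw [hf0]; ring
        · rw [chi_sq hp13 htne ((hQ0mem t).mp ht)]
          rcases eq_or_ne (-c - t) 0 with hz | hnz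
          · have hft : f t = 0 := by
              have ht' : t = -c := by linear_combination -hz
              rw [hfdef, ht']; ring
            rw [hft]; ring
          · rw [chi_sq hp13 hnz hsq]; ring
      · rw [if_neg hsq, chi_nonsq hp13 hsq]; ring
    calc (4 : ZMod p) * ∑ t ∈ D2, f t
        = ∑ t ∈ D2, 4 * f t := by rw [Finset.mul_sum]
      _ = ∑ t ∈ Q0, (if IsSquare (-c - t) then 4 * f t else 0) := Finset.sum_filter _ _
      _ = ∑ t ∈ Q0, (1 + t ^ e) * (1 + (-c - t) ^ e) * f t := (Finset.sum_congr rfl h2').symm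
      _ = ∑ t : ZMod p, (1 + t ^ e) * (1 + (-c - t) ^ e) * f t := h1.symm
      _ = κ * (c ^ 2 / 4) := by simp only [hfdef]; exact sum_gg hp13 hp c
  -- Step 4 : split off the diagonal
  set D : Finset (ZMod p) := D2.filter (fun t => ¬(-c - t = t)) with hDdef
  have hDsplit : ∑ t ∈ D2, f t = (if IsSquare (-c / 2) then -(c ^ 2) / 4 else 0)
      + ∑ t ∈ D, f t := by
    have hsplit := Finset.sum_filter_add_sum_filter_not D2 (fun t => -c - t = t) f
    have hdiag : D2.filter (fun t => -c - t = t)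
        = if IsSquare (-c / 2) then {-c / 2} else ∅ := by
      by_cases hsq2 : IsSquare (-c / 2)
      · rw [if_pos hsq2]
        ext t
        simp only [Finset.mem_filter, Finset.mem_singleton, hD2def]
        constructor
        · rintro ⟨⟨htQ0, hsq⟩, heq⟩
          field_simp
          linear_combination -heq
        · rintro rfl
          have hc2 : -c - (-c / 2) = -c / 2 := by field_simp; ring
          refine ⟨⟨(hQ0mem _).mpr hsq2, ?_⟩, hc2⟩
          rw [hc2]; exact hsq2
      · rw [if_neg hsq2]
        ext t
        simp only [Finset.mem_filter, Finset.notMem_empty, iff_false, hD2def]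
        rintro ⟨⟨htQ0, hsq⟩, heq⟩
        have ht : t = -c / 2 := by field_simp; linear_combination -heq
        exact hsq2 (ht ▸ (hQ0mem t).mp htQ0)
    have hdsum : ∑ t ∈ D2.filter (fun t => -c - t = t), f t
        = (if IsSquare (-c / 2) then -(c ^ 2) / 4 else 0) := by
      rw [hdiag]
      split_ifs with h
      · rw [Finset.sum_singleton]
        show (-c / 2) ^ 2 + c * (-c / 2) = -(c ^ 2) / 4
        field_simp
        ring
      · exact Finset.sum_empty
    rw [← hsplit, hdsum, show D2.filter (fun t => ¬(-c - t = t)) = D from hDdef.symm]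
  -- Step 5 : fiberwise comparison
  have hmapsQ0 : ∀ t ∈ Q0, f t ∈ U := fun t ht => Finset.mem_image_of_mem f ht
  have hDsubQ0 : D ⊆ Q0 := (Finset.filter_subset _ _).trans (Finset.filter_subset _ _)
  have hfibQ0 : ∑ y ∈ U, ∑ t ∈ Q0.filter (fun t => f t = y), f t = ∑ t ∈ Q0, f t :=
    Finset.sum_fiberwise_of_maps_to hmapsQ0 f
  have hfibD : ∑ y ∈ U, ∑ t ∈ D.filter (fun t => f t = y), f t = ∑ t ∈ D, f t :=
    Finset.sum_fiberwise_of_maps_to (fun t ht => hmapsQ0 t (hDsubQ0 ht)) f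
  have hkey : ∀ y ∈ U, 2 * ∑ t ∈ Q0.filter (fun t => f t = y), f t
      = 2 * y + ∑ t ∈ D.filter (fun t => f t = y), f t := by
    intro y hy
    obtain ⟨t₀, ht₀Q0, hft₀⟩ := Finset.mem_image.mp hy
    have hfact : ∀ t : ZMod p, f t = y ↔ (t = t₀ ∨ t = -c - t₀) := by
      intro t
      constructor
      · intro h
        have hz : (t - t₀) * (t + t₀ + c) = 0 := by
          rw [hfdef] at h hft₀
          linear_combination h - hft₀
        rcases mul_eq_zero.mp hz with h1 | h1
        · left; linear_combination h1
        · right; linear_combination h1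
      · rintro (rfl | rfl)
        · exact hft₀
        · rw [hfdef] at hft₀ ⊢; linear_combination hft₀
    have hsqt₀ : IsSquare t₀ := (hQ0mem t₀).mp ht₀Q0
    by_cases hcase : IsSquare (-c - t₀) ∧ -c - t₀ ≠ t₀
    · have hfibeq : Q0.filter (fun t => f t = y) = {t₀, -c - t₀} := by
        ext t
        simp only [Finset.mem_filter, Finset.mem_insert, Finset.mem_singleton]
        constructor
        · rintro ⟨-, hft⟩; exact (hfact t).mp hft
        · rintro (rfl | rfl)
          · exact ⟨ht₀Q0, hft₀⟩
          · exact ⟨(hQ0mem _).mpr hcase.1, (hfact _).mpr (Or.inr rfl)⟩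
      have hDeq : D.filter (fun t => f t = y) = {t₀, -c - t₀} := by
        ext t
        simp only [hDdef, hD2def, Finset.mem_filter, Finset.mem_insert, Finset.mem_singleton]
        constructor
        · rintro ⟨⟨⟨-, -⟩, -⟩, hft⟩; exact (hfact t).mp hft
        · rintro (rfl | rfl)
          · exact ⟨⟨⟨ht₀Q0, hcase.1⟩, hcase.2⟩, hft₀⟩
          · refine ⟨⟨⟨(hQ0mem _).mpr hcase.1, ?_⟩, ?_⟩, (hfact _).mpr (Or.inr rfl)⟩
            · rw [show -c - (-c - t₀) = t₀ by ring]; exact hsqt₀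
            · rw [show -c - (-c - t₀) = t₀ by ring]
              exact fun h => hcase.2 h.symm
      have hne : t₀ ≠ -c - t₀ := fun h => hcase.2 h.symm
      have hfc : f (-c - t₀) = y := (hfact _).mpr (Or.inr rfl)
      rw [hfibeq, hDeq, Finset.sum_pair hne, hft₀, hfc]
      ring
    · have hfibeq : Q0.filter (fun t => f t = y) = {t₀} := by
        ext t
        simp only [Finset.mem_filter, Finset.mem_singleton]
        constructor
        · rintro ⟨htQ0, hft⟩
          rcases (hfact t).mp hft with rfl | rfl
          · rfl
          · by_contra hne'
            exact hcase ⟨(hQ0mem _).mp htQ0, hne'⟩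
        · rintro rfl; exact ⟨ht₀Q0, hft₀⟩
      have hDeq : D.filter (fun t => f t = y) = ∅ := by
        ext t
        simp only [hDdef, hD2def, Finset.mem_filter, Finset.notMem_empty, iff_false]
        rintro ⟨⟨⟨htQ0, hsqb⟩, hneq⟩, hft⟩
        rcases (hfact t).mp hft with rfl | rfl
        · exact hcase ⟨hsqb, hneq⟩
        · apply hcase
          refine ⟨(hQ0mem _).mp htQ0, fun h => ?_⟩
          rw [show -c - (-c - t₀) = t₀ by ring] at hneq
          exact hneq h.symm
      rw [hfibeq, hDeq, Finset.sum_singleton, Finset.sum_empty, hft₀]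
      ring
  -- Step 6 : combine everything
  have hTrel : 2 * (∑ y ∈ U, y) + ∑ t ∈ D, f t = 0 := by
    have h1 : ∑ y ∈ U, (2 * ∑ t ∈ Q0.filter (fun t => f t = y), f t)
        = ∑ y ∈ U, (2 * y + ∑ t ∈ D.filter (fun t => f t = y), f t) :=
      Finset.sum_congr rfl hkey
    rw [← Finset.mul_sum, hfibQ0, hQ0sum, mul_zero] at h1
    rw [Finset.sum_add_distrib, ← Finset.mul_sum, hfibD] at h1
    linear_combination -h1
  have hc4 : c ^ 2 / 4 * 4 = c ^ 2 := div_mul_cancel₀ _ h4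
  have hD2sum' : 16 * ∑ t ∈ D2, f t = κ * c ^ 2 := by
    linear_combination 4 * hD2sum + κ * hc4
  rw [hU]
  have hid : U.sum id = ∑ y ∈ U, y := Finset.sum_congr rfl (fun x _ => rfl)
  rw [hid]
  split_ifs with hsqc
  · rw [if_pos hsqc] at hDsplit
    rw [eq_div_iff h64]
    linear_combination 32 * hTrel + 32 * hDsplit + (-2 : ZMod p) * hD2sum'
      + (-8 : ZMod p) * hc4 + (-c ^ 2) * hκ
  · rw [if_neg hsqc] at hDsplit
    rw [eq_div_iff h64]
    linear_combination 32 * hTrel + 32 * hDsplit + (-2 : ZMod p) * hD2sum' + (-c ^ 2) * hκ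








theorem fourth_iff (hp13 : 13 ≤ p) (hI : IsSquare (-1 : ZMod p)) {z w : ZMod p}
    (hw : w ^ 2 = z) : (∃ b : ZMod p, b ^ 4 = z) ↔ IsSquare w := by
  constructor
  · rintro ⟨b, rfl⟩
    have hz : (w - b ^ 2) * (w + b ^ 2) = 0 := by linear_combination hw
    rcases mul_eq_zero.mp hz with h | h
    · have : w = b ^ 2 := by linear_combination h
      exact ⟨b, by rw [this]; ring⟩
    · have hwb : w = -1 * b ^ 2 := by linear_combination h
      rw [hwb]
      exact hI.mul ⟨b, by ring⟩
  · rintro ⟨r, hr⟩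
    exact ⟨r, by rw [← hw, hr]; ring⟩

theorem neg_one_fourth (hp13 : 13 ≤ p) (h8 : p % 8 = 1) : ∃ b : ZMod p, b ^ 4 = -1 := by
  obtain ⟨g, hg⟩ := IsCyclic.exists_generator (α := (ZMod p)ˣ)
  have hord : orderOf g = p - 1 := by
    rw [orderOf_eq_card_of_forall_mem_zpowers hg, Nat.card_eq_fintype_card,
      ZMod.card_units_eq_totient, Nat.totient_prime hpp.out]
  have hb4 : (g ^ ((p - 1) / 8)) ^ 4 = g ^ ((p - 1) / 2) := by
    rw [← pow_mul]; congr 1; omega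
  have hsq1 : (g ^ ((p - 1) / 2)) ^ 2 = 1 := by
    rw [← pow_mul, show (p - 1) / 2 * 2 = p - 1 by omega, ← hord, pow_orderOf_eq_one]
  have hne1 : g ^ ((p - 1) / 2) ≠ 1 := by
    intro h
    have hdvd := orderOf_dvd_of_pow_eq_one h
    rw [hord] at hdvd
    have := Nat.le_of_dvd (by omega) hdvd
    omega
  have hval : ((g ^ ((p - 1) / 2) : (ZMod p)ˣ) : ZMod p) = -1 := by
    have h1 : ((g ^ ((p - 1) / 2) : (ZMod p)ˣ) : ZMod p) ^ 2 = 1 := by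
      rw [← Units.val_pow_eq_pow_val, hsq1, Units.val_one]
    have h2 : ((g ^ ((p - 1) / 2) : (ZMod p)ˣ) : ZMod p) ≠ 1 := by
      intro h
      exact hne1 (Units.ext h)
    have hfac : (((g ^ ((p - 1) / 2) : (ZMod p)ˣ) : ZMod p) - 1)
        * (((g ^ ((p - 1) / 2) : (ZMod p)ˣ) : ZMod p) + 1) = 0 := by
      linear_combination h1
    rcases mul_eq_zero.mp hfac with h | h
    · exact absurd (by linear_combination h) h2
    · linear_combination h
  refine ⟨((g ^ ((p - 1) / 8) : (ZMod p)ˣ) : ZMod p), ?_⟩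
  rw [← Units.val_pow_eq_pow_val, hb4, hval]

theorem not_neg_one_fourth (hp13 : 13 ≤ p) (h8 : p % 8 = 5) :
    ¬ ∃ b : ZMod p, b ^ 4 = -1 := by
  rintro ⟨b, hb⟩
  have hbne : b ≠ 0 := by
    rintro rfl
    rw [zero_pow (by norm_num)] at hb
    exact one_ne_zero (by linear_combination hb : (1 : ZMod p) = 0)
  set u : (ZMod p)ˣ := Units.mk0 b hbne with hu
  have hu4 : u ^ 4 = -1 := by
    ext
    rw [Units.val_pow_eq_pow_val, hu, Units.val_mk0, Units.val_neg, Units.val_one, hb]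
  have hu8 : u ^ 8 = 1 := by
    rw [show (8 : ℕ) = 4 * 2 by norm_num, pow_mul, hu4]
    exact neg_one_sq
  have hu4ne : u ^ 4 ≠ 1 := by
    rw [hu4]
    intro h
    have : ((-1 : (ZMod p)ˣ) : ZMod p) = ((1 : (ZMod p)ˣ) : ZMod p) := by rw [h]
    simp only [Units.val_neg, Units.val_one] at this
    exact two_ne hp13 (by linear_combination -this)
  have hdvd8 : orderOf u ∣ 8 := orderOf_dvd_of_pow_eq_one hu8
  have hnd4 : ¬ orderOf u ∣ 4 := fun h => hu4ne (orderOf_dvd_iff_pow_eq_one.mp h)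
  have hord8 : orderOf u = 8 := by
    have hmem : orderOf u ∈ Nat.divisors 8 := Nat.mem_divisors.mpr ⟨hdvd8, by norm_num⟩
    rw [show Nat.divisors 8 = {1, 2, 4, 8} from by decide] at hmem
    simp only [Finset.mem_insert, Finset.mem_singleton] at hmem
    rcases hmem with h | h | h | h
    · rw [h] at hnd4; exact absurd (by norm_num) hnd4
    · rw [h] at hnd4; exact absurd (by norm_num) hnd4
    · rw [h] at hnd4; exact absurd (by norm_num) hnd4
    · exact h
  have hcard : orderOf u ∣ p - 1 := by
    have := orderOf_dvd_card (x := u)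
    rwa [ZMod.card_units_eq_totient, Nat.totient_prime hpp.out] at this
  rw [hord8] at hcard
  obtain ⟨k, hk⟩ := hcard
  omega




end Helpers


theorem set_of_sums_one_mod_four (p : ℕ) [Fact p.Prime] (hp7 : 7 ≤ p) (hp : p % 4 = 1) :
    let S : Finset (ZMod p) := Finset.univ.image (fun c : ZMod p =>
      (Finset.univ.image (fun x : ZMod p => x ^ 4 + c * x ^ 2)).sum id)
    ((-1 : ZMod p) ∈ S → S = Finset.univ.image (fun x : ZMod p => x ^ 2)) ∧
    ((-1 : ZMod p) ∉ S → p % 8 = 5 →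
      S = Finset.univ.image (fun x : ZMod p => x ^ 4)) ∧
    ((-1 : ZMod p) ∉ S → p % 8 = 1 →
      S = (Finset.univ.image (fun x : ZMod p => x ^ 2) \
            Finset.univ.image (fun x : ZMod p => x ^ 4)) ∪ {0}) := by
  intro S
  have hp13 : 13 ≤ p := pge13 hp7 hp
  have h2 : (2 : ZMod p) ≠ 0 := two_ne hp13
  have h3ne : (3 : ZMod p) ≠ 0 := three_ne hp13
  have h4ne : (4 : ZMod p) ≠ 0 := by
    rw [show (4 : ZMod p) = 2 ^ 2 by norm_num]; exact pow_ne_zero 2 h2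
  have h8ne : (8 : ZMod p) ≠ 0 := by
    rw [show (8 : ZMod p) = 2 ^ 3 by norm_num]; exact pow_ne_zero 3 h2
  have h64ne : (64 : ZMod p) ≠ 0 := by
    rw [show (64 : ZMod p) = 2 ^ 6 by norm_num]; exact pow_ne_zero 6 h2
  obtain ⟨i, hi⟩ : ∃ i : ZMod p, i ^ 2 = -1 := by
    obtain ⟨r, hr⟩ := (ZMod.exists_sq_eq_neg_one_iff (p := p)).mpr (by omega)
    exact ⟨r, by linear_combination -hr⟩
  have hneg1sq : IsSquare (-1 : ZMod p) := ⟨i, by linear_combination -hi⟩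
  have hine : i ≠ 0 := by
    rintro rfl
    rw [zero_pow (by norm_num)] at hi
    exact one_ne_zero (by linear_combination hi : (1 : ZMod p) = 0)
  have hone_ne : (1 : ZMod p) ≠ -1 := by
    intro h; exact h2 (by linear_combination h)
  have hchi3 : ∀ a : ZMod p, a ≠ 0 → a ^ ((p - 1) / 2) = 1 → IsSquare a := by
    intro a ha h
    by_contra hn
    rw [chi_nonsq hp13 hn] at h
    exact hone_ne h.symm
  have hnn : ∀ a b : ZMod p, ¬IsSquare a → ¬IsSquare b → IsSquare (a * b) := by
    intro a b ha hb
    have hane : a ≠ 0 := fun h => ha (h ▸ ⟨0, by ring⟩)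
    have hbne : b ≠ 0 := fun h => hb (h ▸ ⟨0, by ring⟩)
    exact hchi3 _ (mul_ne_zero hane hbne)
      (by rw [mul_pow, chi_nonsq hp13 ha, chi_nonsq hp13 hb]; ring)
  have hsn : ∀ a b : ZMod p, a ≠ 0 → IsSquare a → ¬IsSquare b → ¬IsSquare (a * b) := by
    intro a b ha hsa hb hsab
    have hbne : b ≠ 0 := fun h => hb (h ▸ ⟨0, by ring⟩)
    have hch := chi_sq hp13 (mul_ne_zero ha hbne) hsab
    rw [mul_pow, chi_sq hp13 ha hsa, chi_nonsq hp13 hb] at hch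
    exact hone_ne (by linear_combination -hch)
  have hSmem : ∀ y : ZMod p, y ∈ S ↔ ∃ c : ZMod p,
      (if IsSquare (-c / 2) then -9 * c ^ 2 / 64 else -c ^ 2 / 64) = y := by
    intro y
    show y ∈ Finset.univ.image _ ↔ _
    rw [Finset.mem_image]
    constructor
    · rintro ⟨c, -, hc⟩
      exact ⟨c, by rw [← Tformula hp13 hp c]; exact hc⟩
    · rintro ⟨c, hc⟩
      exact ⟨c, Finset.mem_univ c, by rw [Tformula hp13 hp c]; exact hc⟩
  have hsqmem : ∀ y : ZMod p,
      y ∈ Finset.univ.image (fun x : ZMod p => x ^ 2) ↔ ∃ s : ZMod p, s ^ 2 = y := by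
    intro y
    rw [Finset.mem_image]
    constructor
    · rintro ⟨x, -, hx⟩; exact ⟨x, hx⟩
    · rintro ⟨s, hs⟩; exact ⟨s, Finset.mem_univ s, hs⟩
  have h4mem : ∀ y : ZMod p,
      y ∈ Finset.univ.image (fun x : ZMod p => x ^ 4) ↔ ∃ b : ZMod p, b ^ 4 = y := by
    intro y
    rw [Finset.mem_image]
    constructor
    · rintro ⟨x, -, hx⟩; exact ⟨x, hx⟩
    · rintro ⟨b, hb⟩; exact ⟨b, Finset.mem_univ b, hb⟩
  -- 3 square implies -1 ∈ S
  have hminus : IsSquare (3 : ZMod p) → (-1 : ZMod p) ∈ S := by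
    intro h3sq
    obtain ⟨j, hj⟩ := h3sq
    have hjne : j ≠ 0 := by rintro rfl; exact h3ne (by rw [hj]; ring)
    rw [hSmem]
    refine ⟨8 / 3, ?_⟩
    have hcond : IsSquare (-(8 / 3) / 2 : ZMod p) := by
      refine ⟨2 * i / j, ?_⟩
      field_simp
      linear_combination (4 * j ^ 2 - 36 : ZMod p) * hi + (4 * i ^ 2 + 12) * hj
    rw [if_pos hcond]
    field_simp
    norm_num
  -- -1 ∈ S implies 3 is a square
  have hplus : (-1 : ZMod p) ∈ S → IsSquare (3 : ZMod p) := by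
    intro hneg
    obtain ⟨c, hc⟩ := (hSmem _).mp hneg
    by_cases hsqc : IsSquare (-c / 2)
    · rw [if_pos hsqc] at hc
      obtain ⟨s, hs⟩ := hsqc
      rw [div_eq_iff h64ne] at hc
      have hcs : c = -(2 * (s * s)) := by
        field_simp at hs
        linear_combination -hs
      rw [hcs] at hc
      have hfac : ((3 * (s * s) - 4) * (3 * (s * s) + 4)) * 4 = 0 := by
        linear_combination -hc
      have hfac2 : (3 * (s * s) - 4) * (3 * (s * s) + 4) = 0 := by
        rcases mul_eq_zero.mp hfac with h | h
        · exact h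
        · exact absurd h h4ne
      have hsne : s ≠ 0 := by
        rintro rfl
        rcases mul_eq_zero.mp hfac2 with h | h
        · exact h4ne (by linear_combination -h)
        · exact h4ne (by linear_combination h)
      rcases mul_eq_zero.mp hfac2 with h | h
      · refine ⟨2 / s, ?_⟩
        field_simp
        linear_combination h
      · refine ⟨2 * i / s, ?_⟩
        field_simp
        linear_combination h + (-4 : ZMod p) * hi
    · rw [if_neg hsqc] at hc
      rw [div_eq_iff h64ne] at hc
      have hfac : (c - 8) * (c + 8) = 0 := by linear_combination -hc
      rcases mul_eq_zero.mp hfac with h | h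
      · exfalso
        apply hsqc
        have hc8 : c = 8 := by linear_combination h
        rw [hc8]
        exact ⟨2 * i, by field_simp; linear_combination (-8 : ZMod p) * hi⟩
      · exfalso
        apply hsqc
        have hc8 : c = -8 := by linear_combination h
        rw [hc8]
        exact ⟨2, by field_simp; norm_num⟩
  refine ⟨?_, ?_, ?_⟩
  · -- Branch 1
    intro hneg
    have h3sq := hplus hneg
    obtain ⟨j, hj⟩ := h3sq
    have hjne : j ≠ 0 := by rintro rfl; exact h3ne (by rw [hj]; ring)
    ext y
    rw [hSmem y, hsqmem y]
    constructor
    · rintro ⟨c, hc⟩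
      by_cases hsqc : IsSquare (-c / 2)
      · rw [if_pos hsqc] at hc
        refine ⟨3 * c * i / 8, ?_⟩
        rw [← hc]
        field_simp
        linear_combination (576 * c ^ 2 : ZMod p) * hi
      · rw [if_neg hsqc] at hc
        refine ⟨c * i / 8, ?_⟩
        rw [← hc]
        field_simp
        linear_combination (64 * c ^ 2 : ZMod p) * hi
    · rintro ⟨s, hs⟩
      rcases eq_or_ne s 0 with rfl | hsne
      · refine ⟨0, ?_⟩
        rw [if_pos ⟨0, by norm_num⟩, ← hs]
        norm_num
      · by_cases hsi : IsSquare (s * i)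
        · refine ⟨8 * s * i / 3, ?_⟩
          have hcond : IsSquare (-(8 * s * i / 3) / 2) := by
            have heq : -(8 * s * i / 3) / 2 = ((2 * i / j) * (2 * i / j)) * (s * i) := by
              field_simp
              linear_combination (8 : ZMod p) * hj - 24 * hi
            rw [heq]
            exact IsSquare.mul ⟨2 * i / j, rfl⟩ hsi
          rw [if_pos hcond, ← hs]
          field_simp
          linear_combination (-576 : ZMod p) * hi
        · refine ⟨8 * s * i, ?_⟩
          have hcond : ¬ IsSquare (-(8 * s * i) / 2) := by
            have heq : -(8 * s * i) / 2 = (-4) * (s * i) := by field_simp; ring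
            rw [heq]
            exact hsn (-4) (s * i) (neg_ne_zero.mpr h4ne)
              ⟨2 * i, by linear_combination (-4 : ZMod p) * hi⟩ hsi
          rw [if_neg hcond, ← hs]
          field_simp
          linear_combination (-64 : ZMod p) * hi
  · -- Branch 2 : p % 8 = 5
    intro hneg h8
    have h3nsq : ¬ IsSquare (3 : ZMod p) := fun h => hneg (hminus h)
    have hinsq : ¬ IsSquare i := by
      rintro ⟨u, hu⟩
      exact not_neg_one_fourth hp13 h8
        ⟨u, by rw [show u ^ 4 = (u * u) ^ 2 by ring, ← hu, hi]⟩
    ext y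
    rw [hSmem y, h4mem y]
    constructor
    · rintro ⟨c, hc⟩
      by_cases hsqc : IsSquare (-c / 2)
      · rw [if_pos hsqc] at hc
        obtain ⟨s, hs⟩ := hsqc
        have hcs : c = -(2 * (s * s)) := by
          field_simp at hs
          linear_combination -hs
        have hw : (3 * (s * s) * i / 4) ^ 2 = -9 * c ^ 2 / 64 := by
          rw [hcs]
          field_simp
          linear_combination (576 * s ^ 4 : ZMod p) * hi
        rw [← hc, fourth_iff hp13 hneg1sq hw]
        have heq : 3 * (s * s) * i / 4 = (3 * i) * ((s / 2) * (s / 2)) := by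
          field_simp
          ring
        rw [heq]
        exact (hnn 3 i h3nsq hinsq).mul ⟨s / 2, rfl⟩
      · rw [if_neg hsqc] at hc
        have hw : ((-c / 2) * i / 4) ^ 2 = -c ^ 2 / 64 := by
          field_simp
          linear_combination (64 * c ^ 2 : ZMod p) * hi
        rw [← hc, fourth_iff hp13 hneg1sq hw]
        have heq : (-c / 2) * i / 4 = ((-c / 2) * i) * ((1 / 2) * (1 / 2)) := by
          field_simp
          norm_num
        rw [heq]
        exact (hnn (-c / 2) i hsqc hinsq).mul ⟨1 / 2, rfl⟩
    · rintro ⟨b, hb⟩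
      rcases eq_or_ne b 0 with rfl | hbne
      · refine ⟨0, ?_⟩
        rw [if_pos ⟨0, by norm_num⟩, ← hb]
        norm_num
      · refine ⟨8 * b ^ 2 * i, ?_⟩
        have hcond : ¬ IsSquare (-(8 * b ^ 2 * i) / 2) := by
          have heq : -(8 * b ^ 2 * i) / 2 = (-4 * b ^ 2) * i := by field_simp; ring
          rw [heq]
          exact hsn (-4 * b ^ 2) i
            (mul_ne_zero (neg_ne_zero.mpr h4ne) (pow_ne_zero 2 hbne))
            ⟨2 * i * b, by linear_combination (-4 * b ^ 2 : ZMod p) * hi⟩ hinsq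
        rw [if_neg hcond, ← hb]
        field_simp
        linear_combination (-64 : ZMod p) * hi
  · -- Branch 3 : p % 8 = 1
    intro hneg h8
    have h3nsq : ¬ IsSquare (3 : ZMod p) := fun h => hneg (hminus h)
    have hisq : IsSquare i := by
      obtain ⟨b, hb⟩ := neg_one_fourth hp13 h8
      have hfac : (b ^ 2 - i) * (b ^ 2 + i) = 0 := by linear_combination hb - hi
      rcases mul_eq_zero.mp hfac with h | h
      · exact ⟨b, by linear_combination -h⟩
      · have hib : i = -1 * (b * b) := by linear_combination h
        rw [hib]
        exact hneg1sq.mul ⟨b, rfl⟩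
    obtain ⟨iu, hiu⟩ := hisq
    have hiune : iu ≠ 0 := by rintro rfl; exact hine (by rw [hiu]; ring)
    ext y
    rw [hSmem y, Finset.mem_union, Finset.mem_sdiff, hsqmem y, h4mem y, Finset.mem_singleton]
    constructor
    · rintro ⟨c, hc⟩
      by_cases hsqc : IsSquare (-c / 2)
      · rw [if_pos hsqc] at hc
        obtain ⟨s, hs⟩ := hsqc
        have hcs : c = -(2 * (s * s)) := by
          field_simp at hs
          linear_combination -hs
        rcases eq_or_ne s 0 with rfl | hsne
        · right
          rw [← hc, hcs]
          norm_num
        · left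
          have hw : (3 * (s * s) * i / 4) ^ 2 = -9 * c ^ 2 / 64 := by
            rw [hcs]
            field_simp
            linear_combination (576 : ZMod p) * hi
          refine ⟨⟨3 * (s * s) * i / 4, by rw [hw, hc]⟩, ?_⟩
          rw [← hc, fourth_iff hp13 hneg1sq hw]
          have heq : 3 * (s * s) * i / 4 = ((s * s) * i / 4) * 3 := by ring
          rw [heq]
          refine hsn ((s * s) * i / 4) 3 ?_ ⟨s * iu / 2, ?_⟩ h3nsq
          · exact div_ne_zero (mul_ne_zero (mul_ne_zero hsne hsne) hine) h4ne
          · field_simp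
            linear_combination (4 : ZMod p) * hiu
      · rw [if_neg hsqc] at hc
        left
        have hw : ((-c / 2) * i / 4) ^ 2 = -c ^ 2 / 64 := by
          field_simp
          linear_combination (64 * c ^ 2 : ZMod p) * hi
        refine ⟨⟨(-c / 2) * i / 4, by rw [hw, hc]⟩, ?_⟩
        rw [← hc, fourth_iff hp13 hneg1sq hw]
        have hcne : -c / 2 ≠ 0 := fun h => hsqc (h ▸ ⟨0, by ring⟩)
        have heq : (-c / 2) * i / 4 = (i / 4) * (-c / 2) := by ring
        rw [heq]
        refine hsn (i / 4) (-c / 2) (div_ne_zero hine h4ne) ⟨iu / 2, ?_⟩ hsqc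
        · field_simp
          linear_combination (4 : ZMod p) * hiu
    · rintro (⟨⟨s, hs⟩, hnf⟩ | rfl)
      · have hsne : s ≠ 0 := by
          rintro rfl
          exact hnf ⟨0, by rw [← hs]; norm_num⟩
        have hsnsq : ¬ IsSquare s := by
          rw [← fourth_iff hp13 hneg1sq hs]
          exact hnf
        refine ⟨8 * s * i, ?_⟩
        have hcond : ¬ IsSquare (-(8 * s * i) / 2) := by
          have heq : -(8 * s * i) / 2 = (-4 * i) * s := by field_simp; ring
          rw [heq]
          refine hsn (-4 * i) s (mul_ne_zero (neg_ne_zero.mpr h4ne) hine)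
            ⟨2 * i * iu, ?_⟩ hsnsq
          linear_combination (-4 : ZMod p) * hiu + (-4 * iu ^ 2 : ZMod p) * hi
        rw [if_neg hcond, ← hs]
        field_simp
        linear_combination (-64 : ZMod p) * hi
      · refine ⟨0, ?_⟩
        rw [if_pos ⟨0, by norm_num⟩]
        norm_num
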